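/- arXiv:1301.7236 — 9 statements merged into one kernel-verified Lean document; each statement's English description precedes it below -/
import Mathlib

section
/- Two-wrongs-make-a-right lemma: Let r⁽¹⁾(x) = b(x)Λ⁽¹⁾(x) mod m(x) and r⁽²⁾(x) = b(x)Λ⁽²⁾(x) mod m(x), with d₁ = deg r⁽¹⁾(x), d₂ = deg r⁽²⁾(x), κ₁ = lcf r⁽¹⁾(x), κ₂ = lcf r⁽²⁾(x), and suppose d₁ ≥ d₂ ≥ 0. Then Λ(x) := κ₂Λ⁽¹⁾(x) − κ₁x^{d₁−d₂}Λ⁽²⁾(x) satisfies deg(b(x)Λ(x) mod m(x)) < d₁. -/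
open Polynomial

/-- Two-wrongs-make-a-right lemma: with `r⁽ⁱ⁾ = bΛ⁽ⁱ⁾ mod m`, `dᵢ = deg r⁽ⁱ⁾`,
`κᵢ = lcf r⁽ⁱ⁾`, and `d₁ ≥ d₂ ≥ 0`, the polynomial
`Λ = κ₂Λ⁽¹⁾ − κ₁x^{d₁−d₂}Λ⁽²⁾` satisfies `deg(bΛ mod m) < d₁`. -/
theorem two_wrongs_make_a_right {F : Type*} [Field F] (m b Λ₁ Λ₂ r₁ r₂ : F[X])
    (hm : 1 ≤ m.degree)
    (hr₁ : r₁ = b * Λ₁ % m) (hr₂ : r₂ = b * Λ₂ % m)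
    (hd₂ : 0 ≤ r₂.degree) (hd₁₂ : r₂.degree ≤ r₁.degree) :
    (b * (C r₂.leadingCoeff * Λ₁ -
        C r₁.leadingCoeff * X ^ (r₁.natDegree - r₂.natDegree) * Λ₂) % m).degree
      < r₁.degree := by
  have hm0 : m ≠ 0 := by
    intro h; rw [h] at hm; simp at hm
  have hr₂0 : r₂ ≠ 0 := by
    intro h; rw [h] at hd₂; simp at hd₂
  have hr₁0 : r₁ ≠ 0 := by
    intro h; rw [h] at hd₁₂
    exact hr₂0 (degree_eq_bot.mp (le_bot_iff.mp hd₁₂))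
  have hκ₁ : r₁.leadingCoeff ≠ 0 := leadingCoeff_ne_zero.mpr hr₁0
  have hκ₂ : r₂.leadingCoeff ≠ 0 := leadingCoeff_ne_zero.mpr hr₂0
  have hnat : r₂.natDegree ≤ r₁.natDegree := natDegree_le_natDegree hd₁₂
  set k := r₁.natDegree - r₂.natDegree with hk
  set p : F[X] := C r₂.leadingCoeff * r₁ - C r₁.leadingCoeff * X ^ k * r₂ with hp
  -- degree of the combination drops
  have hdeg1 : (C r₂.leadingCoeff * r₁).degree = r₁.degree := degree_C_mul hκ₂
  have hdeg2 : (C r₁.leadingCoeff * X ^ k * r₂).degree = r₁.degree := by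
    rw [mul_assoc, degree_C_mul hκ₁, degree_mul, degree_X_pow,
      degree_eq_natDegree hr₂0, degree_eq_natDegree hr₁0]
    rw [← Nat.cast_add, Nat.sub_add_cancel hnat]
  have hpne : C r₂.leadingCoeff * r₁ ≠ 0 := mul_ne_zero (by simpa using hκ₂) hr₁0
  have hlc : (C r₂.leadingCoeff * r₁).leadingCoeff
      = (C r₁.leadingCoeff * X ^ k * r₂).leadingCoeff := by
    rw [leadingCoeff_mul, leadingCoeff_mul, leadingCoeff_mul, leadingCoeff_C,
      leadingCoeff_X_pow, mul_one, mul_comm, leadingCoeff_C]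
  have hpdeg : p.degree < r₁.degree := by
    have := degree_sub_lt (hdeg1.trans hdeg2.symm) hpne hlc
    rwa [hdeg1] at this
  -- the remainder equals p
  have hdegm : p.degree < m.degree := by
    refine hpdeg.trans_le ?_
    rw [hr₁]
    exact le_of_lt (EuclideanDomain.mod_lt _ hm0)
  have key : b * (C r₂.leadingCoeff * Λ₁ -
      C r₁.leadingCoeff * X ^ k * Λ₂)
      = p + m * (C r₂.leadingCoeff * (b * Λ₁ / m)
        - C r₁.leadingCoeff * X ^ k * (b * Λ₂ / m)) := by
    have h1 : b * Λ₁ = m * (b * Λ₁ / m) + r₁ := by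
      rw [hr₁, EuclideanDomain.div_add_mod]
    have h2 : b * Λ₂ = m * (b * Λ₂ / m) + r₂ := by
      rw [hr₂, EuclideanDomain.div_add_mod]
    rw [hp]
    linear_combination C r₂.leadingCoeff * h1 - (C r₁.leadingCoeff * X ^ k) * h2
  set q : F[X] := C r₂.leadingCoeff * (b * Λ₁ / m)
      - C r₁.leadingCoeff * X ^ k * (b * Λ₂ / m) with hq
  have hdvd : m * C m.leadingCoeff⁻¹ ∣ (p + m * q) - p := by
    refine ⟨C m.leadingCoeff * q, ?_⟩
    rw [add_sub_cancel_left, mul_assoc, ← mul_assoc (C m.leadingCoeff⁻¹), ← C_mul,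
      inv_mul_cancel₀ (leadingCoeff_ne_zero.mpr hm0), C_1, one_mul]
  rw [key, mod_def,
    modByMonic_eq_of_dvd_sub (monic_mul_leadingCoeff_inv hm0) hdvd, ← mod_def,
    (mod_eq_self_iff hm0).mpr hdegm]
  exact hpdeg
end

section
/- Uniqueness of the minimal-degree solution: If Λ⁽¹⁾(x) and Λ⁽²⁾(x) are two nonzero polynomials of the smallest degree among all nonzero Λ with deg(b(x)Λ(x) mod m(x)) < d, then Λ⁽¹⁾(x) and Λ⁽²⁾(x) are equal up to a nonzero scalar factor. -/
open Polynomial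

lemma mod_linear_comb {F : Type*} [Field F] (m p q : F[X]) (c₁ c₂ : F) :
    (C c₂ * p - C c₁ * q) % m = C c₂ * (p % m) - C c₁ * (q % m) := by
  rw [mod_def, mod_def, mod_def, sub_modByMonic, ← smul_eq_C_mul, ← smul_eq_C_mul,
    smul_modByMonic, smul_modByMonic, smul_eq_C_mul, smul_eq_C_mul]

/-- Uniqueness of the minimal-degree solution of the Partial-Inverse Problem:
two nonzero minimal-degree solutions are equal up to a nonzero scalar factor. -/
theorem partial_inverse_solution_unique {F : Type*} [Field F] (b m : F[X])
    (hb : b ≠ 0) (hm : m ≠ 0) (hdeg : b.degree < m.degree)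
    (d : ℕ) (hd1 : 1 ≤ d) (hd2 : d ≤ m.natDegree)
    (Λ₁ Λ₂ : F[X]) (hΛ₁ : Λ₁ ≠ 0) (hΛ₂ : Λ₂ ≠ 0)
    (h₁ : (b * Λ₁ % m).degree < (d : WithBot ℕ))
    (h₂ : (b * Λ₂ % m).degree < (d : WithBot ℕ))
    (hmin₁ : ∀ Λ : F[X], Λ ≠ 0 → (b * Λ % m).degree < (d : WithBot ℕ) →
      Λ₁.natDegree ≤ Λ.natDegree)
    (hmin₂ : ∀ Λ : F[X], Λ ≠ 0 → (b * Λ % m).degree < (d : WithBot ℕ) →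
      Λ₂.natDegree ≤ Λ.natDegree) :
    ∃ c : F, c ≠ 0 ∧ Λ₁ = C c * Λ₂ := by
  set c₁ := Λ₁.leadingCoeff with hc₁
  set c₂ := Λ₂.leadingCoeff with hc₂
  have hc₁0 : c₁ ≠ 0 := leadingCoeff_ne_zero.mpr hΛ₁
  have hc₂0 : c₂ ≠ 0 := leadingCoeff_ne_zero.mpr hΛ₂
  have hn : Λ₁.natDegree = Λ₂.natDegree :=
    le_antisymm (hmin₁ Λ₂ hΛ₂ h₂) (hmin₂ Λ₁ hΛ₁ h₁)
  set Λ := C c₂ * Λ₁ - C c₁ * Λ₂ with hΛdef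
  have hΛ0 : Λ = 0 := by
    by_contra hΛ
    have hdegΛ : Λ.degree < Λ₁.degree := by
      have h : Λ.degree < (C c₂ * Λ₁).degree := by
        apply degree_sub_lt
        · rw [degree_C_mul hc₂0, degree_C_mul hc₁0,
            degree_eq_natDegree hΛ₁, degree_eq_natDegree hΛ₂, hn]
        · exact mul_ne_zero (by simpa using hc₂0) hΛ₁
        · rw [leadingCoeff_mul, leadingCoeff_mul, leadingCoeff_C, leadingCoeff_C,
            ← hc₁, ← hc₂, mul_comm]
      rwa [degree_C_mul hc₂0] at h
    have hmodΛ : (b * Λ % m).degree < (d : WithBot ℕ) := by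
      have : b * Λ = C c₂ * (b * Λ₁) - C c₁ * (b * Λ₂) := by ring
      rw [this, mod_linear_comb]
      calc (C c₂ * (b * Λ₁ % m) - C c₁ * (b * Λ₂ % m)).degree
          ≤ max (C c₂ * (b * Λ₁ % m)).degree (C c₁ * (b * Λ₂ % m)).degree :=
            degree_sub_le _ _
        _ < (d : WithBot ℕ) := by
            rw [max_lt_iff, degree_C_mul hc₂0, degree_C_mul hc₁0]
            exact ⟨h₁, h₂⟩
    have := hmin₁ Λ hΛ hmodΛ
    have : Λ.natDegree < Λ₁.natDegree :=
      natDegree_lt_natDegree hΛ hdegΛ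
    omega
  refine ⟨c₂⁻¹ * c₁, mul_ne_zero (inv_ne_zero hc₂0) hc₁0, ?_⟩
  have heq : C c₂ * Λ₁ = C c₁ * Λ₂ := by
    have := sub_eq_zero.mp hΛ0
    exact this
  calc Λ₁ = C c₂⁻¹ * C c₂ * Λ₁ := by rw [← C_mul, inv_mul_cancel₀ hc₂0, C_1, one_mul]
    _ = C c₂⁻¹ * (C c₁ * Λ₂) := by rw [mul_assoc, heq]
    _ = C (c₂⁻¹ * c₁) * Λ₂ := by rw [← mul_assoc, ← C_mul]
end

section
/- Degree Change Lemma: Let Λ(x) be a minimal partial inverse of b(x) with r(x) = b(x)Λ(x) mod m(x), and suppose deg Λ(x) ≤ deg m(x) − deg r(x). Then any nonzero Λ⁽¹⁾(x) ∈ F[x] with deg(b(x)Λ⁽¹⁾(x) mod m(x)) < deg r(x) satisfies deg Λ⁽¹⁾(x) ≥ deg m(x) − deg r(x). -/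
open Polynomial

/-- A nonzero `Λ` is a minimal partial inverse of `b` w.r.t. `m` if every
nonzero `Λ'` with `deg(bΛ' mod m) ≤ deg(bΛ mod m)` has `deg Λ' ≥ deg Λ`. -/
def MinimalPartialInverse {F : Type*} [Field F] (b m Λ : F[X]) : Prop :=
  Λ ≠ 0 ∧ ∀ Λ' : F[X], Λ' ≠ 0 →
    (b * Λ' % m).degree ≤ (b * Λ % m).degree → Λ.natDegree ≤ Λ'.natDegree

/-- Degree Change Lemma: if `Λ` is a minimal partial inverse of `b` with
`r = bΛ mod m` and `deg Λ ≤ deg m − deg r`, then any nonzero `Λ⁽¹⁾` with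
`deg(bΛ⁽¹⁾ mod m) < deg r` satisfies `deg Λ⁽¹⁾ ≥ deg m − deg r`. -/
theorem degree_change_lemma {F : Type*} [Field F] (b m Λ r : F[X])
    (hb : b ≠ 0) (hm : m ≠ 0) (hdeg : b.degree < m.degree)
    (hmin : MinimalPartialInverse b m Λ) (hr : r = b * Λ % m)
    (hΛdeg : Λ.natDegree + r.natDegree ≤ m.natDegree)
    (Λ₁ : F[X]) (hΛ₁ : Λ₁ ≠ 0)
    (h₁ : (b * Λ₁ % m).degree < r.degree) :
    m.natDegree ≤ Λ₁.natDegree + r.natDegree := by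
  obtain ⟨hΛ0, hmin'⟩ := hmin
  set r₁ : F[X] := b * Λ₁ % m with hr₁
  have hrne : r ≠ 0 := by
    intro h
    rw [h] at h₁
    simp at h₁
  -- m divides Λ₁ * r - Λ * r₁
  have e1 : m * (b * Λ / m) + b * Λ % m = b * Λ := EuclideanDomain.div_add_mod _ _
  have e2 : m * (b * Λ₁ / m) + b * Λ₁ % m = b * Λ₁ := EuclideanDomain.div_add_mod _ _
  have hdvd : m ∣ (Λ₁ * r - Λ * r₁) := by
    refine ⟨Λ * (b * Λ₁ / m) - Λ₁ * (b * Λ / m), ?_⟩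
    rw [hr, hr₁]
    linear_combination Λ₁ * e1 - Λ * e2
  by_contra hlt
  push_neg at hlt
  -- degree bounds
  have hΛ₁rne : Λ₁ * r ≠ 0 := mul_ne_zero hΛ₁ hrne
  have h1 : (Λ₁ * r).natDegree < m.natDegree := by
    rw [natDegree_mul hΛ₁ hrne]; exact hlt
  have h1' : (Λ₁ * r).degree < m.degree :=
    (natDegree_lt_natDegree_iff hΛ₁rne).mp h1
  have hmindeg : Λ.natDegree ≤ Λ₁.natDegree := by
    refine hmin' Λ₁ hΛ₁ ?_
    rw [← hr]; exact le_of_lt h₁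
  by_cases hr₁0 : r₁ = 0
  · -- then Λ₁ * r - Λ * r₁ = Λ₁ * r ≠ 0
    have hne : Λ₁ * r - Λ * r₁ ≠ 0 := by rw [hr₁0]; simpa using hΛ₁rne
    have := Polynomial.degree_le_of_dvd hdvd hne
    rw [hr₁0] at this
    simp only [mul_zero, sub_zero] at this
    exact absurd (lt_of_le_of_lt this h1') (lt_irrefl _)
  · have hr₁lt : r₁.natDegree < r.natDegree :=
      natDegree_lt_natDegree hr₁0 (hr₁ ▸ h₁)
    have h2 : (Λ * r₁).natDegree < m.natDegree := by
      rw [natDegree_mul hΛ0 hr₁0]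
      omega
    by_cases hzero : Λ₁ * r - Λ * r₁ = 0
    · -- Λ₁ * r = Λ * r₁ : compare natDegrees
      have heq : Λ₁ * r = Λ * r₁ := sub_eq_zero.mp hzero
      have := congrArg natDegree heq
      rw [natDegree_mul hΛ₁ hrne, natDegree_mul hΛ0 hr₁0] at this
      omega
    · have hdle := Polynomial.degree_le_of_dvd hdvd hzero
      have h2' : (Λ * r₁).degree < m.degree :=
        (natDegree_lt_natDegree_iff (mul_ne_zero hΛ0 hr₁0)).mp h2
      have : (Λ₁ * r - Λ * r₁).degree < m.degree :=
        lt_of_le_of_lt (degree_sub_le _ _) (max_lt h1' h2')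
      exact absurd (lt_of_le_of_lt hdle this) (lt_irrefl _)
end

section
/- Corollary to the Degree Change Lemma: with the notation and hypotheses of the Degree Change Lemma, if deg Λ⁽¹⁾(x) = deg m(x) − deg r(x) exactly, then Λ⁽¹⁾(x) is itself a minimal partial inverse of b(x). -/
open Polynomial

/-- Corollary to the Degree Change Lemma: if moreover
`deg Λ⁽¹⁾ = deg m − deg r` exactly, then `Λ⁽¹⁾` is itself a minimal partial
inverse of `b`. -/
theorem degree_change_corollary {F : Type*} [Field F] (b m Λ r : F[X])
    (hb : b ≠ 0) (hm : m ≠ 0) (hdeg : b.degree < m.degree)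
    (hmin : MinimalPartialInverse b m Λ) (hr : r = b * Λ % m)
    (hΛdeg : Λ.natDegree + r.natDegree ≤ m.natDegree)
    (Λ₁ : F[X]) (hΛ₁ : Λ₁ ≠ 0)
    (h₁ : (b * Λ₁ % m).degree < r.degree)
    (heq : Λ₁.natDegree + r.natDegree = m.natDegree) :
    MinimalPartialInverse b m Λ₁ := by
  obtain ⟨hΛ0, hminΛ⟩ := hmin
  have hr0 : r ≠ 0 := by
    intro h; rw [h, degree_zero] at h₁; exact not_lt_bot h₁
  refine ⟨hΛ₁, fun Λ' hΛ' hle => ?_⟩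
  -- set r' := b * Λ' % m
  set r' : F[X] := b * Λ' % m with hr'
  have hr'r : r'.degree < r.degree := lt_of_le_of_lt hle h₁
  -- m divides Λ' * r - Λ * r'
  have hdvd1 : m ∣ b * Λ - r :=
    ⟨b * Λ / m, by have h := EuclideanDomain.div_add_mod (b * Λ) m
                   rw [hr]; linear_combination -h⟩
  have hdvd2 : m ∣ b * Λ' - r' :=
    ⟨b * Λ' / m, by have h := EuclideanDomain.div_add_mod (b * Λ') m
                    linear_combination -h⟩
  have hdvd : m ∣ Λ' * r - Λ * r' := by
    have : Λ' * r - Λ * r' = Λ * (b * Λ' - r') - Λ' * (b * Λ - r) := by ring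
    rw [this]
    exact dvd_sub (Dvd.dvd.mul_left hdvd2 Λ) (Dvd.dvd.mul_left hdvd1 Λ')
  -- goal: Λ₁.natDegree ≤ Λ'.natDegree, with Λ₁.natDegree = m.natDegree - r.natDegree
  have key : m.natDegree ≤ Λ'.natDegree + r.natDegree := by
    by_cases hd : Λ' * r - Λ * r' = 0
    · -- Λ' * r = Λ * r'
      have he : Λ' * r = Λ * r' := by linear_combination hd
      have hr'0 : r' ≠ 0 := by
        intro h0
        rw [h0, mul_zero] at he
        exact (mul_ne_zero hΛ' hr0) he
      have hnd : Λ'.natDegree + r.natDegree = Λ.natDegree + r'.natDegree := by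
        have := congrArg natDegree he
        rwa [natDegree_mul hΛ' hr0, natDegree_mul hΛ0 hr'0] at this
      have hlt : r'.natDegree < r.natDegree := by
        exact natDegree_lt_natDegree hr'0 hr'r
      have : Λ.natDegree ≤ Λ'.natDegree := by
        apply hminΛ Λ' hΛ'
        rw [← hr, ← hr']; exact le_of_lt hr'r
      omega
    · -- nonzero multiple of m
      have hdegd : m.degree ≤ (Λ' * r - Λ * r').degree := degree_le_of_dvd hdvd hd
      have h1 : (Λ * r').degree < m.degree := by
        rcases eq_or_ne r' 0 with h0 | h0
        · rw [h0, mul_zero, degree_zero]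
          exact bot_lt_iff_ne_bot.2 (degree_ne_bot.2 hm)
        · rw [degree_mul]
          have hrm : r.degree < m.degree := by rw [hr]; exact EuclideanDomain.mod_lt _ hm
          have := natDegree_lt_natDegree h0 hr'r
          rw [degree_eq_natDegree hΛ0, degree_eq_natDegree h0, degree_eq_natDegree hm,
            ← Nat.cast_add, Nat.cast_lt]
          have hrmn : r.natDegree < m.natDegree := natDegree_lt_natDegree hr0 hrm
          omega
      have h2 : m.degree ≤ (Λ' * r).degree := by
        by_contra hcon
        push_neg at hcon
        have : (Λ' * r - Λ * r').degree < m.degree :=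
          lt_of_le_of_lt (degree_sub_le _ _) (max_lt hcon h1)
        exact absurd hdegd (not_le_of_gt this)
      have h3 : (Λ' * r) ≠ 0 := mul_ne_zero hΛ' hr0
      rw [degree_eq_natDegree hm, degree_eq_natDegree h3, Nat.cast_le] at h2
      rwa [natDegree_mul hΛ' hr0] at h2
  omega
end

section
/- In the Degree Change Lemma setting, if both deg Λ(x) ≤ deg m(x) − deg r(x) and deg Λ⁽¹⁾(x) < deg m(x) − deg r(x), then the congruence Λ⁽¹⁾(x)r(x) ≡ Λ(x)r⁽¹⁾(x) (mod m(x)) becomes an equality of polynomials: Λ⁽¹⁾(x)r(x) = Λ(x)r⁽¹⁾(x). -/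
open Polynomial

/-- In the Degree Change Lemma setting, if `deg Λ ≤ deg m − deg r` and
`deg Λ⁽¹⁾ < deg m − deg r`, the congruence `Λ⁽¹⁾r ≡ Λr⁽¹⁾ (mod m)` becomes an
equality of polynomials. -/
theorem congruence_becomes_equality {F : Type*} [Field F] (b m Λ Λ₁ r r₁ : F[X])
    (hb : b ≠ 0) (hm : m ≠ 0) (hdeg : b.degree < m.degree)
    (hΛ : Λ ≠ 0) (hΛ₁ : Λ₁ ≠ 0)
    (hr : r = b * Λ % m) (hr₁ : r₁ = b * Λ₁ % m)
    (hrr : r₁.degree < r.degree)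
    (hΛdeg : Λ.natDegree + r.natDegree ≤ m.natDegree)
    (hΛ₁deg : Λ₁.natDegree + r.natDegree < m.natDegree) :
    Λ₁ * r = Λ * r₁ := by
  have hrne : r ≠ 0 := by
    intro h
    rw [h, degree_zero] at hrr
    exact (not_lt_bot hrr)
  -- divisibility
  have hdvd : m ∣ (Λ₁ * r - Λ * r₁) := by
    have e1 : r = b * Λ - m * (b * Λ / m) := by
      rw [hr, EuclideanDomain.mod_eq_sub_mul_div]
    have e2 : r₁ = b * Λ₁ - m * (b * Λ₁ / m) := by
      rw [hr₁, EuclideanDomain.mod_eq_sub_mul_div]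
    refine ⟨Λ * (b * Λ₁ / m) - Λ₁ * (b * Λ / m), ?_⟩
    rw [e1, e2]; ring
  -- degree bounds
  have h1 : (Λ₁ * r).degree < m.degree := by
    rw [degree_mul, degree_eq_natDegree hΛ₁, degree_eq_natDegree hrne,
      degree_eq_natDegree hm, ← Nat.cast_add]
    exact_mod_cast hΛ₁deg
  have h2 : (Λ * r₁).degree < m.degree := by
    rcases eq_or_ne r₁ 0 with h | h
    · rw [h, mul_zero, degree_zero]
      exact bot_lt_iff_ne_bot.mpr fun he => hm (degree_eq_bot.mp he)
    · have hnd : r₁.natDegree < r.natDegree := natDegree_lt_natDegree h hrr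
      rw [degree_mul, degree_eq_natDegree hΛ, degree_eq_natDegree h,
        degree_eq_natDegree hm, ← Nat.cast_add]
      exact_mod_cast Nat.lt_of_lt_of_le (Nat.add_lt_add_left hnd _) hΛdeg
  have hdegd : (Λ₁ * r - Λ * r₁).degree < m.degree :=
    lt_of_le_of_lt (degree_sub_le _ _) (max_lt h1 h2)
  have := Polynomial.eq_zero_of_dvd_of_degree_lt hdvd hdegd
  exact sub_eq_zero.mp this
end

section
/- Alternative Key Equation (forward direction): If w_H(e) ≤ (n−k)/2, then the error locator polynomial Λ_e(x) satisfies deg(Y(x)Λ_e(x) mod m(x)) < n − (n−k)/2. -/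
open Polynomial

/-- Alternative Key Equation (forward direction): if `w_H(e) ≤ (n−k)/2`, then
the error locator polynomial `Λ_e` satisfies
`deg(Y(x)Λ_e(x) mod m(x)) < n − (n−k)/2`. -/
theorem alternative_key_equation_forward {F : Type*} [Field F] [Fintype F] [DecidableEq F]
    (n k : ℕ) (β : Fin n → F) (hβ : Function.Injective β)
    (m : F[X]) (hm : m = ∏ ℓ : Fin n, (X - C (β ℓ)))
    (c e : Fin n → F)
    -- `c` is a codeword: `deg ψ⁻¹(c) < k`
    (Cp : F[X]) (hCdeg : Cp.degree < k) (hC : ∀ ℓ, Cp.eval (β ℓ) = c ℓ)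
    -- `Y = ψ⁻¹(y)` for the received word `y = c + e`
    (Y : F[X]) (hYdeg : Y.degree < n) (hY : ∀ ℓ, Y.eval (β ℓ) = c ℓ + e ℓ)
    (Λe : F[X]) (hΛe : Λe = ∏ ℓ ∈ Finset.univ.filter (fun ℓ => e ℓ ≠ 0), (X - C (β ℓ)))
    (hw : ((Finset.univ.filter (fun ℓ => e ℓ ≠ 0)).card : ℝ) ≤ ((n : ℝ) - k) / 2) :
    (Y * Λe % m).degree.map (Nat.cast : ℕ → ℝ)
      < ((n : ℝ) - ((n : ℝ) - k) / 2 : ℝ) := by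
  classical
  set s := Finset.univ.filter (fun ℓ => e ℓ ≠ 0) with hs
  set t := s.card with ht
  -- m is monic, degree n
  have hmmonic : m.Monic := by
    rw [hm]; exact monic_prod_of_monic _ _ fun ℓ _ => monic_X_sub_C _
  have hmdeg : m.degree = (n : WithBot ℕ) := by
    rw [hm, degree_prod]
    simp [degree_X_sub_C]
  -- Λe degree = t
  have hΛdeg : Λe.degree = (t : WithBot ℕ) := by
    rw [hΛe, degree_prod]
    simp [degree_X_sub_C, ht]
  -- m divides (Y - Cp) * Λe
  have hdvd : m ∣ (Y - Cp) * Λe := by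
    rw [hm]
    refine Finset.prod_dvd_of_coprime
      (fun a _ b _ hab => (pairwise_coprime_X_sub_C hβ) hab) fun ℓ _ => ?_
    by_cases he : e ℓ = 0
    · refine Dvd.dvd.mul_right ?_ _
      rw [dvd_iff_isRoot]
      simp [IsRoot, hY ℓ, hC ℓ, he]
    · refine Dvd.dvd.mul_left ?_ _
      rw [hΛe]
      exact Finset.dvd_prod_of_mem _ (by simp [hs, he])
  -- t ≤ n - k bounds over naturals
  have htn : k + t ≤ n := by
    have h2 : (k : ℝ) + t ≤ n := by nlinarith [hw, (Nat.cast_nonneg t : (0:ℝ) ≤ t)]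
    exact_mod_cast (by push_cast; linarith : ((k + t : ℕ) : ℝ) ≤ (n : ℝ))
  -- degree (Cp * Λe) < k + t
  have hdegCL : (Cp * Λe).degree < ((k + t : ℕ) : WithBot ℕ) := by
    rcases eq_or_ne Cp 0 with h0 | h0
    · simp only [h0, zero_mul, degree_zero]
      exact WithBot.bot_lt_coe _
    · rw [degree_mul, hΛdeg]
      have : Cp.degree + (t : WithBot ℕ) < (k : WithBot ℕ) + (t : WithBot ℕ) :=
        WithBot.add_lt_add_right (by exact_mod_cast WithBot.coe_ne_bot) hCdeg
      simpa [Nat.cast_add] using this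
  have hdegCLn : (Cp * Λe).degree < m.degree := by
    rw [hmdeg]
    exact lt_of_lt_of_le hdegCL (by exact_mod_cast htn)
  -- Y * Λe % m = Cp * Λe
  have hmod : Y * Λe % m = Cp * Λe := by
    have : Y * Λe %ₘ m = Cp * Λe := by
      have hsplit : Y * Λe = (Y - Cp) * Λe + Cp * Λe := by ring
      rw [hsplit, add_modByMonic,
        (modByMonic_eq_zero_iff_dvd hmmonic).2 hdvd, zero_add,
        (modByMonic_eq_self_iff hmmonic).2 hdegCLn]
    rw [← modByMonic_eq_mod _ hmmonic, this]
  rw [hmod]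
  -- final: map degree to ℝ
  rcases eq_or_ne (Cp * Λe) 0 with h0 | h0
  · simp only [h0, degree_zero, Option.map]
    exact WithBot.bot_lt_coe _
  · have hd := degree_eq_natDegree h0
    set d := (Cp * Λe).natDegree
    rw [hd]
    rw [hd] at hdegCL
    have hdlt : d < k + t := by exact_mod_cast hdegCL
    have hfin : (d : ℝ) < (n : ℝ) - ((n : ℝ) - k) / 2 := by
      have : (d : ℝ) < (k : ℝ) + t := by exact_mod_cast hdlt
      linarith
    simp only [Nat.cast_withBot, WithBot.map_coe]
    exact_mod_cast hfin
end

section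
/- Alternative Key Equation (converse direction): Let y, e ∈ F^n and t ∈ ℝ with w_H(e) ≤ t ≤ (n−k)/2, and suppose y − e is a codeword (deg ψ⁻¹(y−e) < k). If some nonzero Λ(x) ∈ F[x] with deg Λ(x) ≤ t satisfies deg(Y(x)Λ(x) mod m(x)) < n − t, then Λ(x) is a polynomial multiple of Λ_e(x). -/
open Polynomial

/-- Alternative Key Equation (converse direction): for `y, e` with
`w_H(e) ≤ t ≤ (n−k)/2` and `y − e` a codeword, any nonzero `Λ` with
`deg Λ ≤ t` and `deg(Y(x)Λ(x) mod m(x)) < n − t` is a polynomial multiple of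
the error locator `Λ_e`. -/
theorem alternative_key_equation_converse {F : Type*} [Field F] [Fintype F] [DecidableEq F]
    (n k : ℕ) (β : Fin n → F) (hβ : Function.Injective β)
    (m : F[X]) (hm : m = ∏ ℓ : Fin n, (X - C (β ℓ)))
    (y e : Fin n → F) (t : ℝ)
    (hw : ((Finset.univ.filter (fun ℓ => e ℓ ≠ 0)).card : ℝ) ≤ t)
    (ht : t ≤ ((n : ℝ) - k) / 2)
    -- `y − e` is a codeword: `deg ψ⁻¹(y − e) < k`
    (D : F[X]) (hDdeg : D.degree < k) (hD : ∀ ℓ, D.eval (β ℓ) = y ℓ - e ℓ)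
    -- `Y = ψ⁻¹(y)`
    (Y : F[X]) (hYdeg : Y.degree < n) (hY : ∀ ℓ, Y.eval (β ℓ) = y ℓ)
    (Λe : F[X]) (hΛe : Λe = ∏ ℓ ∈ Finset.univ.filter (fun ℓ => e ℓ ≠ 0), (X - C (β ℓ)))
    (Λ : F[X]) (hΛ : Λ ≠ 0) (hΛdeg : (Λ.natDegree : ℝ) ≤ t)
    (hkey : (Y * Λ % m).degree.map (Nat.cast : ℕ → ℝ) < ((n : ℝ) - t : ℝ)) :
    Λe ∣ Λ := by
  classical
  set Z' : Finset (Fin n) := Finset.univ.filter (fun ℓ => e ℓ ≠ 0) with hZ'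
  by_cases hZe : Z' = ∅
  · rw [hΛe, hZe, Finset.prod_empty]; exact one_dvd _
  -- w ≥ 1
  have hw1 : 1 ≤ Z'.card := Finset.card_pos.mpr (Finset.nonempty_iff_ne_empty.mpr hZe)
  have hwn : Z'.card ≤ n := by
    simpa using Finset.card_le_card (Finset.filter_subset _ (Finset.univ : Finset (Fin n)))
  have ht1 : (1 : ℝ) ≤ t := le_trans (by exact_mod_cast hw1) hw
  -- m evaluates to 0 at each β ℓ
  have hmeval : ∀ ℓ : Fin n, m.eval (β ℓ) = 0 := by
    intro ℓ
    rw [hm, eval_prod]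
    exact Finset.prod_eq_zero (Finset.mem_univ ℓ) (by simp)
  -- the residual polynomial
  set A : F[X] := Y * Λ % m with hA
  set S : F[X] := A - D * Λ with hS
  -- evaluation of A
  have hAeval : ∀ ℓ : Fin n, A.eval (β ℓ) = y ℓ * Λ.eval (β ℓ) := by
    intro ℓ
    have h := EuclideanDomain.div_add_mod (Y * Λ) m
    have h2 : Y * Λ % m = Y * Λ - m * (Y * Λ / m) := eq_sub_of_add_eq' h
    rw [hA, h2]
    simp [hmeval ℓ, hY ℓ]
  -- S vanishes on the non-error positions
  set Z : Finset (Fin n) := Finset.univ.filter (fun ℓ => e ℓ = 0) with hZ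
  have hSeval : ∀ ℓ ∈ Z, S.eval (β ℓ) = 0 := by
    intro ℓ hℓ
    have he0 : e ℓ = 0 := by simpa [hZ] using hℓ
    simp [hS, hAeval ℓ, hD ℓ, he0]
  -- cardinality of Z
  have hcardZ : Z.card + Z'.card = n := by
    have := Finset.card_filter_add_card_filter_not
      (s := (Finset.univ : Finset (Fin n))) (p := fun ℓ => e ℓ = 0)
    simp only [Finset.card_univ, Fintype.card_fin] at this
    rw [hZ, hZ']
    convert this using 3
  -- degree bound for A over ℝ
  have hAdeg : (A.natDegree : ℝ) < (n : ℝ) - t := by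
    by_cases hA0 : A = 0
    · rw [hA0, natDegree_zero]
      push_cast
      have hk0 : (0:ℝ) ≤ k := Nat.cast_nonneg k
      linarith [ht, ht1]
    · have hdg : A.degree = (A.natDegree : ℕ) := (degree_eq_natDegree hA0)
      have h2 : (A.degree.map (Nat.cast : ℕ → ℝ)) = ((A.natDegree : ℝ) : WithBot ℝ) := by
        rw [hdg, Nat.cast_withBot, WithBot.map_coe]
      rw [h2, WithBot.coe_lt_coe] at hkey
      exact hkey
  -- degree bound for D * Λ over ℝ
  have hBdeg : ((D * Λ).natDegree : ℝ) < (n : ℝ) - t := by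
    by_cases hD0 : D = 0
    · rw [hD0, zero_mul, natDegree_zero]
      push_cast
      nlinarith [hw, ht, ht1, Nat.cast_nonneg (α := ℝ) k]
    · have hDk : (D.natDegree : ℝ) < k := by
        exact_mod_cast (natDegree_lt_iff_degree_lt hD0).mpr hDdeg
      have h1 : ((D * Λ).natDegree : ℝ) ≤ (D.natDegree : ℝ) + Λ.natDegree := by
        exact_mod_cast natDegree_mul_le
      have : (D.natDegree : ℝ) + Λ.natDegree < k + t := by linarith [hΛdeg]
      nlinarith [ht]
  -- hence S = 0
  have hScard : (S.natDegree : ℝ) < (Z.card : ℝ) := by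
    have h1 : S.natDegree ≤ max A.natDegree (D * Λ).natDegree := natDegree_sub_le _ _
    have h2 : (S.natDegree : ℝ) < (n : ℝ) - t := by
      rcases max_cases A.natDegree (D * Λ).natDegree with ⟨hmx, _⟩ | ⟨hmx, _⟩ <;>
        rw [hmx] at h1 <;>
        [exact lt_of_le_of_lt (by exact_mod_cast h1) hAdeg;
         exact lt_of_le_of_lt (by exact_mod_cast h1) hBdeg]
    have h3 : (Z.card : ℝ) = (n : ℝ) - Z'.card := by
      have := hcardZ
      push_cast [← this]
      ring
    rw [h3]
    linarith [hw]
  have hS0 : S = 0 := by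
    apply Polynomial.eq_zero_of_natDegree_lt_card_of_eval_eq_zero S
      (f := fun ℓ : Z => β ℓ.1) (hβ.comp Subtype.val_injective)
    · exact fun i => hSeval i.1 i.2
    · rw [Fintype.card_coe]
      exact_mod_cast hScard
  -- so m divides (Y - D) * Λ
  have hdvd : m ∣ (Y - D) * Λ := by
    have h := EuclideanDomain.div_add_mod (Y * Λ) m
    have hAeq : A = D * Λ := sub_eq_zero.mp (hS ▸ hS0)
    rw [hA] at hAeq
    refine ⟨Y * Λ / m, ?_⟩
    linear_combination -h + hAeq
  -- each error-locator factor divides Λ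
  have hfac : ∀ ℓ ∈ Z', (X - C (β ℓ)) ∣ Λ := by
    intro ℓ hℓ
    have hp : Prime (X - C (β ℓ)) := prime_X_sub_C (β ℓ)
    have hdm : (X - C (β ℓ)) ∣ m := hm ▸ Finset.dvd_prod_of_mem _ (Finset.mem_univ ℓ)
    rcases hp.2.2 _ _ (dvd_trans hdm hdvd) with h | h
    · exfalso
      have hroot : (Y - D).eval (β ℓ) = 0 := by
        have := (dvd_iff_isRoot).mp h
        simpa [IsRoot] using this
      have : e ℓ = 0 := by
        have heval : (Y - D).eval (β ℓ) = e ℓ := by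
          simp [hY ℓ, hD ℓ]
        rw [heval] at hroot; exact hroot
      have hne : e ℓ ≠ 0 := by simpa [hZ'] using hℓ
      exact hne this
    · exact h
  -- conclude via pairwise coprimality
  rw [hΛe]
  exact Finset.prod_dvd_of_coprime
    ((Polynomial.pairwise_coprime_X_sub_C hβ).set_pairwise _) hfac
end

section
/- Codeword recovery: If Λ(x) is a nonzero multiple of Λ_e(x) with deg Λ(x) ≤ n − k, then C(x) = (Y(x)Λ(x) mod m(x)) / Λ(x), i.e., Y(x)Λ(x) mod m(x) = C(x)Λ(x). -/
open Polynomial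

/-- Codeword recovery: if `Λ` is a nonzero multiple of `Λ_e` with
`deg Λ ≤ n − k`, then `Y(x)Λ(x) mod m(x) = C(x)Λ(x)`. -/
theorem codeword_recovery {F : Type*} [Field F] [Fintype F] [DecidableEq F]
    (n k : ℕ) (hk : k ≤ n) (β : Fin n → F) (hβ : Function.Injective β)
    (m : F[X]) (hm : m = ∏ ℓ : Fin n, (X - C (β ℓ)))
    (c e : Fin n → F)
    -- `C = ψ⁻¹(c)` is a codeword transform, `Y = ψ⁻¹(c + e)`
    (Cp : F[X]) (hCdeg : Cp.degree < k) (hC : ∀ ℓ, Cp.eval (β ℓ) = c ℓ)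
    (Y : F[X]) (hYdeg : Y.degree < n) (hY : ∀ ℓ, Y.eval (β ℓ) = c ℓ + e ℓ)
    (Λe : F[X]) (hΛe : Λe = ∏ ℓ ∈ Finset.univ.filter (fun ℓ => e ℓ ≠ 0), (X - C (β ℓ)))
    (Λ : F[X]) (hΛ : Λ ≠ 0) (hmul : Λe ∣ Λ) (hΛdeg : Λ.natDegree ≤ n - k) :
    Y * Λ % m = Cp * Λ := by
  have hmdeg : m.degree = n := by
    rw [hm]
    rw [Polynomial.degree_prod]
    simp [Polynomial.degree_X_sub_C]
  have hm0 : m ≠ 0 := by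
    rw [hm]
    exact Finset.prod_ne_zero_iff.2 fun ℓ _ => X_sub_C_ne_zero (β ℓ)
  -- Pc divides Y - Cp
  have hPc : (∏ ℓ ∈ Finset.univ.filter (fun ℓ => ¬ e ℓ ≠ 0), (X - C (β ℓ))) ∣ Y - Cp := by
    refine Finset.prod_dvd_of_coprime ?_ ?_
    · intro a _ b _ hab
      exact pairwise_coprime_X_sub_C hβ hab
    · intro ℓ hℓ
      rw [Finset.mem_filter, not_not] at hℓ
      rw [dvd_iff_isRoot, IsRoot.def, eval_sub, hY, hC, hℓ.2, add_zero, sub_self]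
  have hsplit : m = Λe * ∏ ℓ ∈ Finset.univ.filter (fun ℓ => ¬ e ℓ ≠ 0), (X - C (β ℓ)) := by
    rw [hm, hΛe, Finset.prod_filter_mul_prod_filter_not]
  have hdvd : m ∣ Y * Λ - Cp * Λ := by
    have : Y * Λ - Cp * Λ = Λ * (Y - Cp) := by ring
    rw [this, hsplit]
    exact mul_dvd_mul hmul hPc
  obtain ⟨q, hq⟩ := hdvd
  have hYΛ : Y * Λ = Cp * Λ + m * q := by linear_combination hq
  have hmonic : m.Monic := by
    rw [hm]; exact monic_prod_of_monic _ _ fun ℓ _ => monic_X_sub_C (β ℓ)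
  rw [← Polynomial.modByMonic_eq_mod _ hmonic, hYΛ, Polynomial.add_modByMonic,
    Polynomial.self_mul_modByMonic hmonic, add_zero,
    Polynomial.modByMonic_eq_self_iff hmonic, hmdeg]
  rcases eq_or_ne Cp 0 with h0 | h0
  · rw [h0, zero_mul, degree_zero]
    rcases Nat.eq_zero_or_pos n with hn | hn
    · -- n = 0 : Λe = 1 (empty product over Fin 0), but also filter empty; Λ nonzero
      exact WithBot.bot_lt_coe _
    · exact WithBot.bot_lt_coe _
  · have hΛd : Λ.degree ≤ (n - k : ℕ) := Polynomial.degree_le_of_natDegree_le hΛdeg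
    calc (Cp * Λ).degree = Cp.degree + Λ.degree := degree_mul
      _ < (k : WithBot ℕ) + (n - k : ℕ) := by
          exact WithBot.add_lt_add_of_lt_of_le (by simp [hΛ]) hCdeg hΛd
      _ = (n : WithBot ℕ) := by rw [← Nat.cast_add, Nat.add_sub_cancel' hk]
end

section
/- Irrelevance of low-order coefficients: Suppose Λ(x) is nonzero with deg Λ(x) ≤ deg m(x) − d and deg(b(x)Λ(x) mod m(x)) < d. If b̃(x) agrees with b(x) on all coefficients of index ≥ 2d − deg m(x), and m̃(x) agrees with m(x) on all coefficients of index ≥ 2d − deg m(x) + 1 (with deg m̃ = deg m), then deg(b̃(x)Λ(x) mod m̃(x)) < d as well. -/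
open Polynomial

/-- Irrelevance of low-order coefficients: if `Λ ≠ 0` with
`deg Λ ≤ deg m − d` and `deg(bΛ mod m) < d`, and `b̃` agrees with `b` on all
coefficients of index `≥ 2d − deg m`, and `m̃` agrees with `m` on all
coefficients of index `≥ 2d − deg m + 1` (with `deg m̃ = deg m`), then
`deg(b̃Λ mod m̃) < d` as well. -/
theorem low_order_coefficients_irrelevant {F : Type*} [Field F] (b m : F[X])
    (hb : b ≠ 0) (hm : m ≠ 0) (hdeg : b.degree < m.degree)
    (d : ℕ) (hd1 : 1 ≤ d) (hd2 : d ≤ m.natDegree)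
    (Λ : F[X]) (hΛ : Λ ≠ 0) (hΛdeg : Λ.natDegree + d ≤ m.natDegree)
    (hkey : (b * Λ % m).degree < (d : WithBot ℕ))
    (btilde mtilde : F[X])
    (hbt : ∀ ℓ : ℕ, (2 * d : ℤ) - m.natDegree ≤ ℓ → btilde.coeff ℓ = b.coeff ℓ)
    (hmt : ∀ ℓ : ℕ, (2 * d : ℤ) - m.natDegree + 1 ≤ ℓ → mtilde.coeff ℓ = m.coeff ℓ)
    (hmtdeg : mtilde.degree = m.degree) :
    (btilde * Λ % mtilde).degree < (d : WithBot ℕ) := by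
  set n := m.natDegree with hn
  set q := b * Λ / m with hq
  set r := b * Λ % m with hr
  have h1 : m * q + r = b * Λ := EuclideanDomain.div_add_mod (b * Λ) m
  have hmdeg : m.degree = (n : WithBot ℕ) := degree_eq_natDegree hm
  -- degree bound for q
  have hqdeg : q.degree < ((n - d : ℕ) : WithBot ℕ) := by
    rcases eq_or_ne q 0 with h0 | h0
    · rw [h0, degree_zero]
      exact bot_lt_iff_ne_bot.2 (by simp)
    · have hmq : (m * q).degree = (n : WithBot ℕ) + q.degree := by
        rw [degree_mul, hmdeg]
      have hbΛ : (b * Λ).degree < ((n + (n - d) : ℕ) : WithBot ℕ) := by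
        rw [degree_mul]
        have h1' : b.degree < (n : WithBot ℕ) := hmdeg ▸ hdeg
        have h2' : Λ.degree ≤ ((n - d : ℕ) : WithBot ℕ) := by
          refine degree_le_of_natDegree_le ?_
          omega
        calc b.degree + Λ.degree ≤ b.degree + ((n - d : ℕ) : WithBot ℕ) :=
              add_le_add_right h2' _
          _ < (n : WithBot ℕ) + ((n - d : ℕ) : WithBot ℕ) := by
              apply WithBot.add_lt_add_right (by simp) h1'
          _ = ((n + (n - d) : ℕ) : WithBot ℕ) := by push_cast; ring
      have hle : d ≤ n + (n - d) := by omega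
      have hrdeg : r.degree < ((n + (n - d) : ℕ) : WithBot ℕ) :=
        lt_of_lt_of_le hkey (by exact_mod_cast hle)
      have hmqlt : (m * q).degree < ((n + (n - d) : ℕ) : WithBot ℕ) := by
        have : m * q = b * Λ - r := by rw [← h1]; ring
        rw [this]
        exact lt_of_le_of_lt (degree_sub_le _ _) (max_lt hbΛ hrdeg)
      rw [hmq, degree_eq_natDegree h0, ← Nat.cast_add, Nat.cast_lt] at hmqlt
      rw [degree_eq_natDegree h0, Nat.cast_lt]
      omega
  have hqcoeff : ∀ i : ℕ, n - d ≤ i → q.coeff i = 0 := fun i hi =>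
    coeff_eq_zero_of_degree_lt (lt_of_lt_of_le hqdeg (by exact_mod_cast Nat.cast_le.2 hi))
  -- the modified remainder
  set rt := r + (btilde - b) * Λ - q * (mtilde - m) with hrt
  have heq : rt + mtilde * q = btilde * Λ := by
    have : (btilde - b) * Λ + b * Λ = btilde * Λ := by ring
    rw [hrt, ← this, ← h1]; ring
  have hrtdeg : rt.degree < (d : WithBot ℕ) := by
    rw [degree_lt_iff_coeff_zero]
    intro ℓ hℓ'
    have hℓ : d ≤ ℓ := by exact_mod_cast hℓ'
    have hc1 : r.coeff ℓ = 0 :=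
      coeff_eq_zero_of_degree_lt (lt_of_lt_of_le hkey (by exact_mod_cast Nat.cast_le.2 hℓ))
    have hc2 : ((btilde - b) * Λ).coeff ℓ = 0 := by
      rw [coeff_mul]
      apply Finset.sum_eq_zero
      rintro ⟨i, j⟩ hij
      rw [Finset.HasAntidiagonal.mem_antidiagonal] at hij
      by_cases hcase : (2 * d : ℤ) - n ≤ i
      · have : (btilde - b).coeff i = 0 := by
          rw [coeff_sub, hbt i hcase, sub_self]
        rw [this, zero_mul]
      · have hilt : (i : ℤ) < 2 * d - n := by omega
        have hjgt : Λ.natDegree < j := by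
          have h1' : (Λ.natDegree : ℤ) + d ≤ n := by exact_mod_cast hΛdeg
          have h2' : (i : ℤ) + j = ℓ := by exact_mod_cast hij
          have h3' : (d : ℤ) ≤ ℓ := by exact_mod_cast hℓ
          omega
        rw [coeff_eq_zero_of_natDegree_lt hjgt, mul_zero]
    have hc3 : (q * (mtilde - m)).coeff ℓ = 0 := by
      rw [coeff_mul]
      apply Finset.sum_eq_zero
      rintro ⟨i, j⟩ hij
      rw [Finset.HasAntidiagonal.mem_antidiagonal] at hij
      by_cases hcase : (2 * d : ℤ) - n + 1 ≤ j
      · have : (mtilde - m).coeff j = 0 := by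
          rw [coeff_sub, hmt j hcase, sub_self]
        rw [this, mul_zero]
      · have hige : n - d ≤ i := by
          have h2' : (i : ℤ) + j = ℓ := by exact_mod_cast hij
          have h3' : (d : ℤ) ≤ ℓ := by exact_mod_cast hℓ
          have h4' : (d : ℤ) ≤ n := by exact_mod_cast hd2
          omega
        rw [hqcoeff i hige, zero_mul]
    rw [hrt, coeff_sub, coeff_add, hc1, hc2, hc3]
    ring
  -- conclude via uniqueness of the remainder
  have hmt0 : mtilde ≠ 0 := fun h => by
    rw [h, degree_zero] at hmtdeg
    exact hm (degree_eq_bot.1 hmtdeg.symm)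
  have hlc : mtilde.leadingCoeff ≠ 0 := leadingCoeff_ne_zero.2 hmt0
  have hmonic : (mtilde * C mtilde.leadingCoeff⁻¹).Monic :=
    monic_mul_leadingCoeff_inv hmt0
  have hgdeg : (mtilde * C mtilde.leadingCoeff⁻¹).degree = mtilde.degree :=
    degree_mul_leadingCoeff_inv mtilde hmt0
  have hrtlt : rt.degree < (mtilde * C mtilde.leadingCoeff⁻¹).degree := by
    rw [hgdeg, hmtdeg, hmdeg]
    exact lt_of_lt_of_le hrtdeg (by exact_mod_cast Nat.cast_le.2 hd2)
  have hmodm : btilde * Λ %ₘ (mtilde * C mtilde.leadingCoeff⁻¹) = rt := by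
    refine (div_modByMonic_unique (C mtilde.leadingCoeff * q) rt hmonic ⟨?_, hrtlt⟩).2
    rw [← heq]
    have : mtilde * C mtilde.leadingCoeff⁻¹ * (C mtilde.leadingCoeff * q) =
        mtilde * q * C (mtilde.leadingCoeff⁻¹ * mtilde.leadingCoeff) := by
      rw [C_mul]; ring
    rw [this, inv_mul_cancel₀ hlc, C_1, mul_one]
  rw [Polynomial.mod_def, hmodm]
  exact hrtdeg
end
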